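/- For natural numbers n ≥ 1 and b ≥ 1, 12·n·b²·s(2n²b² + 2nb + 1, 2nb²) = 2n²b² − 3nb² + 1. -/

import Mathlib

open Finset

/-- The sawtooth function `((x))`: zero on integers, else `x - ⌊x⌋ - 1/2`. -/
def saw (x : ℚ) : ℚ := if x = ⌊x⌋ then 0 else x - ⌊x⌋ - 1/2

/-- The Dedekind sum `s(p,q) = ∑_{i=1}^{|q|} ((i/q)) ((p i/q))`. -/
noncomputable def dedekindSum (p q : ℤ) : ℚ :=
  ∑ i ∈ Finset.Icc (1 : ℤ) |q|, saw ((i : ℚ) / (q : ℚ)) * saw ((p : ℚ) * (i : ℚ) / (q : ℚ))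

lemma saw_zero : saw 0 = 0 := by simp [saw]

lemma saw_intCast (m : ℤ) : saw (m:ℚ) = 0 := by simp [saw]

lemma saw_add_int (x : ℚ) (m : ℤ) : saw (x + m) = saw x := by
  have h : (x + (m:ℚ) = ((⌊x⌋ + m : ℤ):ℚ)) ↔ x = (⌊x⌋:ℚ) := by
    push_cast; constructor <;> intro h <;> linarith
  unfold saw
  rw [Int.floor_add_intCast]
  by_cases hx : x = (⌊x⌋:ℚ)
  · rw [if_pos (h.mpr hx), if_pos hx]
  · rw [if_neg (fun hh => hx (h.mp hh)), if_neg hx]; push_cast; ring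

lemma saw_div0 (M q : ℕ) (h1 : 1 ≤ M) (h2 : M < q) :
    saw ((M:ℚ)/q) = (M:ℚ)/q - 1/2 := by
  have hq0 : (0:ℚ) < q := by exact_mod_cast (by omega : 0 < q)
  have hM0 : (0:ℚ) < M := by exact_mod_cast h1
  have hpos : 0 < (M:ℚ)/q := div_pos hM0 hq0
  have hlt : (M:ℚ)/q < 1 := by rw [div_lt_one hq0]; exact_mod_cast h2
  have hfl : ⌊(M:ℚ)/q⌋ = 0 := Int.floor_eq_zero_iff.mpr ⟨le_of_lt hpos, hlt⟩
  unfold saw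
  rw [hfl, if_neg (by push_cast; exact ne_of_gt hpos)]
  push_cast; ring

lemma saw_div1 (M q : ℕ) (h1 : q + 1 ≤ M) (h2 : M < 2*q) :
    saw ((M:ℚ)/q) = (M:ℚ)/q - 3/2 := by
  have hq0 : (0:ℚ) < q := by exact_mod_cast (by omega : 0 < q)
  have hge : 1 < (M:ℚ)/q := by
    rw [lt_div_iff₀ hq0]; rw [one_mul]; exact_mod_cast h1
  have hlt : (M:ℚ)/q < 2 := by
    rw [div_lt_iff₀ hq0]
    calc (M:ℚ) < ((2*q : ℕ):ℚ) := by exact_mod_cast h2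
      _ = 2*q := by push_cast; ring
  have hfl : ⌊(M:ℚ)/q⌋ = 1 := by
    rw [Int.floor_eq_iff]
    constructor
    · push_cast; linarith
    · push_cast; linarith
  unfold saw
  rw [hfl, if_neg (by push_cast; exact ne_of_gt hge)]
  push_cast; ring

lemma sum_range_cast (m : ℕ) : ∑ i ∈ range m, (i:ℚ) = m*(m-1)/2 := by
  induction m with
  | zero => simp
  | succ k ih => rw [Finset.sum_range_succ, ih]; push_cast; ring

lemma sum_range_sq_cast (m : ℕ) : ∑ i ∈ range m, (i:ℚ)^2 = m*(m-1)*(2*m-1)/6 := by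
  induction m with
  | zero => simp
  | succ k ih => rw [Finset.sum_range_succ, ih]; push_cast; ring

lemma sum_quad (m : ℕ) (c2 c1 c0 : ℚ) :
    ∑ j ∈ range m, (c2*(j:ℚ)^2 + c1*(j:ℚ) + c0)
      = c2*((m:ℚ)*(m-1)*(2*m-1)/6) + c1*((m:ℚ)*(m-1)/2) + c0*m := by
  rw [Finset.sum_add_distrib, Finset.sum_add_distrib, ← Finset.mul_sum, ← Finset.mul_sum,
    sum_range_cast, sum_range_sq_cast, Finset.sum_const, Finset.card_range]
  ring

lemma sum_range_mul (f : ℕ → ℚ) (a c : ℕ) :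
    ∑ k ∈ range (a*c), f k = ∑ j ∈ range a, ∑ r ∈ range c, f (c*j+r) := by
  induction a with
  | zero => simp
  | succ k ih =>
    rw [Nat.succ_mul, Finset.sum_range_add, ih, Finset.sum_range_succ]
    congr 1
    exact Finset.sum_congr rfl fun r _ => by rw [Nat.mul_comm k c]

lemma filter_range_le (a m : ℕ) : (range m).filter (fun j => a ≤ j) = Ico a m := by
  ext x; simp [Finset.mem_filter, Finset.mem_range, Finset.mem_Ico]; omega

lemma sum_lin_Ico (a m : ℕ) (h : a ≤ m) (c1 c0 : ℚ) :
    ∑ j ∈ Ico a m, (c1*(j:ℚ) + c0)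
      = c1*((m:ℚ)*(m-1)/2 - (a:ℚ)*(a-1)/2) + c0*((m:ℚ)-a) := by
  rw [Finset.sum_Ico_eq_sub _ h]
  have h1 := sum_quad m 0 c1 c0
  have h2 := sum_quad a 0 c1 c0
  simp only [zero_mul, zero_add] at h1 h2
  rw [h1, h2]; ring

lemma sum_Icc_int (q : ℕ) (f : ℤ → ℚ) (hq1 : 0 < q) (h0 : f 0 = 0) (hq : f (q:ℤ) = 0) :
    ∑ i ∈ Finset.Icc (1:ℤ) (q:ℤ), f i = ∑ k ∈ range q, f (k:ℤ) := by
  have h1 : Finset.Icc (1:ℤ) (q:ℤ) = insert (q:ℤ) (Finset.Ico (1:ℤ) (q:ℤ)) := by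
    ext x; simp only [Finset.mem_Icc, Finset.mem_Ico, Finset.mem_insert]; omega
  have h2 : Finset.Ico (0:ℤ) (q:ℤ) = insert (0:ℤ) (Finset.Ico (1:ℤ) (q:ℤ)) := by
    ext x; simp only [Finset.mem_Ico, Finset.mem_insert]; omega
  have hn1 : (q:ℤ) ∉ Finset.Ico (1:ℤ) (q:ℤ) := by simp
  have hn2 : (0:ℤ) ∉ Finset.Ico (1:ℤ) (q:ℤ) := by simp
  rw [h1, Finset.sum_insert hn1, hq, zero_add]
  have h2' : ∑ i ∈ Finset.Ico (0:ℤ) (q:ℤ), f i = ∑ i ∈ Finset.Ico (1:ℤ) (q:ℤ), f i := by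
    rw [h2, Finset.sum_insert hn2, h0, zero_add]
  rw [← h2']
  have h3 : Finset.Ico (0:ℤ) (q:ℤ)
      = (range q).map ⟨(fun k : ℕ => (k:ℤ)), fun a b hab => by simpa using hab⟩ := by
    ext x
    simp only [Finset.mem_Ico, Finset.mem_map, Finset.mem_range, Function.Embedding.coeFn_mk]
    constructor
    · rintro ⟨hx0, hxq⟩; exact ⟨x.toNat, by omega, by show ((x.toNat:ℕ):ℤ) = x; omega⟩
    · rintro ⟨k, hk, rfl⟩; exact ⟨by show (0:ℤ) ≤ (k:ℤ); omega, by show (k:ℤ) < q; omega⟩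
  rw [h3, Finset.sum_map]
  rfl

lemma saw_second (n b j r : ℕ) (hn : 1 ≤ n) (hb : 1 ≤ b) (hj : j < 2*n*b) (hr : r < b)
    (hne : ¬(j = 0 ∧ r = 0)) :
    saw ((2*(n:ℚ)^2*(b:ℚ)^2 + 2*(n:ℚ)*(b:ℚ) + 1) * ((b:ℚ)*j+r) / ((2*n*b^2 : ℕ):ℚ))
      = ((b:ℚ)*j+r)/((2*n*b^2 : ℕ):ℚ) + (r:ℚ)/b
        - (if 2*n*(b-r) ≤ j then (1:ℚ) else 0) - 1/2 := by
  have hq0 : (0:ℕ) < 2*n*b^2 := by positivity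
  have hqQ0 : (0:ℚ) < ((2*n*b^2 : ℕ):ℚ) := by exact_mod_cast hq0
  have hb0 : (0:ℚ) < b := by exact_mod_cast hb
  -- the shifted numerator
  have hsh : (2*(n:ℚ)^2*(b:ℚ)^2 + 2*(n:ℚ)*(b:ℚ) + 1) * ((b:ℚ)*j+r) / ((2*n*b^2 : ℕ):ℚ)
      = ((b*j + r*(2*n*b+1) : ℕ):ℚ)/((2*n*b^2 : ℕ):ℚ) + (((j + n*(b*j+r) : ℕ):ℤ):ℚ) := by
    field_simp
    push_cast
    ring
  rw [hsh, saw_add_int]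
  have hMQ : ((b*j + r*(2*n*b+1) : ℕ):ℚ)/((2*n*b^2 : ℕ):ℚ)
      = ((b:ℚ)*j+r)/((2*n*b^2 : ℕ):ℚ) + (r:ℚ)/b := by
    field_simp; push_cast; ring
  by_cases hc : 2*n*(b-r) ≤ j
  · -- c = 1
    have hr1 : 1 ≤ r := by
      by_contra h
      push_neg at h
      have hr0 : r = 0 := by omega
      rw [hr0, Nat.sub_zero] at hc
      exact absurd hj (not_lt.mpr hc)
    have hzc : (j:ℤ) ≥ 2*n*((b:ℤ)-r) := by
      have := hc; zify [hr.le] at this; linarith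
    have hgt : 2*n*b^2 + 1 ≤ b*j + r*(2*n*b+1) := by
      zify
      have h1 : (b:ℤ)*j ≥ (b:ℤ)*(2*n*((b:ℤ)-r)) :=
        mul_le_mul_of_nonneg_left hzc (by positivity)
      nlinarith [h1, hr1, hr]
    have hlt : b*j + r*(2*n*b+1) < 2*(2*n*b^2) := by
      zify
      have h1 : (j:ℤ) ≤ 2*(n:ℤ)*b - 1 := by
        have : (j:ℤ) < 2*(n:ℤ)*b := by exact_mod_cast hj
        linarith
      have h2 : (r:ℤ) ≤ (b:ℤ) - 1 := by
        have : (r:ℤ) < (b:ℤ) := by exact_mod_cast hr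
        linarith
      have h3 : (b:ℤ)*j ≤ (b:ℤ)*(2*(n:ℤ)*b-1) := mul_le_mul_of_nonneg_left h1 (by positivity)
      nlinarith [h3, h2, hn, hb]
    rw [saw_div1 _ _ hgt hlt, if_pos hc, hMQ]
    ring
  · -- c = 0
    have hzc : (j:ℤ) + 1 ≤ 2*n*((b:ℤ)-r) := by
      push_neg at hc
      have := hc; zify [hr.le] at this; linarith
    have h1M : 1 ≤ b*j + r*(2*n*b+1) := by
      rcases Nat.eq_zero_or_pos j with h0 | h0
      · have hr1 : 1 ≤ r := by omega
        have : r ≤ r*(2*n*b+1) := Nat.le_mul_of_pos_right r (by positivity)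
        omega
      · have : b ≤ b*j := Nat.le_mul_of_pos_right b h0
        omega
    have hlt : b*j + r*(2*n*b+1) < 2*n*b^2 := by
      zify
      have h3 : (b:ℤ)*(j+1) ≤ (b:ℤ)*(2*n*((b:ℤ)-r)) :=
        mul_le_mul_of_nonneg_left hzc (by positivity)
      nlinarith [h3, hr, hb]
    rw [saw_div0 _ _ h1M hlt, if_neg hc, hMQ]
    ring
lemma inner_sum1 (n b r : ℕ) (hn : 1 ≤ n) (hb : 1 ≤ b) (hr : r < b) :
    ∑ j ∈ range (2*n*b),
      ((((b:ℚ)*j+r)/((2*n*b^2 : ℕ):ℚ) - 1/2) *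
        (((b:ℚ)*j+r)/((2*n*b^2 : ℕ):ℚ) + (r:ℚ)/b
          - (if 2*n*(b-r) ≤ j then (1:ℚ) else 0) - 1/2))
    = (1/(2*(n:ℚ)*b^3) + n/b)*(r:ℚ)^2 + (-(1/(2*(n:ℚ)*b^2)) - n)*(r:ℚ)
        + (1/(12*(n:ℚ)*b) + n*b/6) := by
  have hb0 : (0:ℚ) < b := by exact_mod_cast hb
  have hn0 : (0:ℚ) < n := by exact_mod_cast hn
  have hqc : ((2*n*b^2 : ℕ):ℚ) = 2*(n:ℚ)*b^2 := by push_cast; ring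
  set c2 : ℚ := 1/(4*(n:ℚ)^2*b^2) with hc2
  set c1 : ℚ := (r:ℚ)/(2*(n:ℚ)^2*b^3) + (r:ℚ)/(2*(n:ℚ)*b^2) - 1/(2*(n:ℚ)*b) with hc1
  set c0 : ℚ := (r:ℚ)^2/(4*(n:ℚ)^2*b^4) + (r:ℚ)^2/(2*(n:ℚ)*b^3) - (r:ℚ)/(2*(n:ℚ)*b^2)
      - (r:ℚ)/(2*b) + 1/4 with hc0
  set l1 : ℚ := 1/(2*(n:ℚ)*b) with hl1
  set l0 : ℚ := (r:ℚ)/(2*(n:ℚ)*b^2) - 1/2 with hl0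
  have hsplit : ∀ j ∈ range (2*n*b),
      ((((b:ℚ)*j+r)/((2*n*b^2 : ℕ):ℚ) - 1/2) *
        (((b:ℚ)*j+r)/((2*n*b^2 : ℕ):ℚ) + (r:ℚ)/b
          - (if 2*n*(b-r) ≤ j then (1:ℚ) else 0) - 1/2))
      = (c2*(j:ℚ)^2 + c1*(j:ℚ) + c0)
        - (if 2*n*(b-r) ≤ j then (l1*(j:ℚ) + l0) else 0) := by
    intro j _
    rw [hqc]
    by_cases h : 2*n*(b-r) ≤ j
    · simp only [if_pos h, hc2, hc1, hc0, hl1, hl0]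
      field_simp
      ring
    · simp only [if_neg h, hc2, hc1, hc0, hl1, hl0]
      field_simp
      ring
  rw [Finset.sum_congr rfl hsplit, Finset.sum_sub_distrib, sum_quad]
  have hITE : ∑ j ∈ range (2*n*b), (if 2*n*(b-r) ≤ j then (l1*(j:ℚ) + l0) else 0)
      = ∑ j ∈ Ico (2*n*(b-r)) (2*n*b), (l1*(j:ℚ) + l0) := by
    rw [← filter_range_le, Finset.sum_filter]
  have hle : 2*n*(b-r) ≤ 2*n*b := Nat.mul_le_mul_left _ (Nat.sub_le b r)
  rw [hITE, sum_lin_Ico _ _ hle]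
  have hcast : ((2*n*(b-r) : ℕ):ℚ) = 2*(n:ℚ)*((b:ℚ)-r) := by
    push_cast [Nat.cast_sub hr.le]; ring
  have hcast2 : ((2*n*b : ℕ):ℚ) = 2*(n:ℚ)*b := by push_cast; ring
  rw [hcast, hcast2]; simp only [hc2, hc1, hc0, hl1, hl0]
  field_simp
  ring

lemma term_eq (n b j r : ℕ) (hn : 1 ≤ n) (hb : 1 ≤ b) (hj : j < 2*n*b) (hr : r < b)
    (hne : ¬(j = 0 ∧ r = 0)) :
    saw (((b:ℚ)*j+r)/((2*n*b^2 : ℕ):ℚ))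
      * saw ((2*(n:ℚ)^2*(b:ℚ)^2 + 2*(n:ℚ)*(b:ℚ) + 1) * ((b:ℚ)*j+r) / ((2*n*b^2 : ℕ):ℚ))
    = (((b:ℚ)*j+r)/((2*n*b^2:ℕ):ℚ) - 1/2)
      * (((b:ℚ)*j+r)/((2*n*b^2:ℕ):ℚ) + (r:ℚ)/b
          - (if 2*n*(b-r) ≤ j then (1:ℚ) else 0) - 1/2) := by
  have hk1 : 1 ≤ b*j + r := by
    rcases Nat.eq_zero_or_pos j with h0 | h0
    · subst h0; simp only [Nat.mul_zero, Nat.zero_add]; omega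
    · have : b ≤ b*j := Nat.le_mul_of_pos_right b h0
      omega
  have hkq : b*j + r < 2*n*b^2 := by
    calc b*j + r < b*j + b := by omega
      _ = b*(j+1) := by ring
      _ ≤ b*(2*n*b) := Nat.mul_le_mul_left b hj
      _ = 2*n*b^2 := by ring
  have hc : ((b*j+r : ℕ):ℚ) = (b:ℚ)*j+r := by push_cast; ring
  rw [saw_second n b j r hn hb hj hr hne, ← hc, saw_div0 _ _ hk1 hkq, hc]

lemma key (n b : ℕ) (hn : 1 ≤ n) (hb : 1 ≤ b) :
    dedekindSum (2*(n:ℤ)^2*(b:ℤ)^2 + 2*(n:ℤ)*(b:ℤ) + 1) (2*(n:ℤ)*(b:ℤ)^2)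
      = 1/(12*(n:ℚ)*(b:ℚ)^2) + (n:ℚ)/6 - 1/4 := by
  have hb0 : (0:ℚ) < b := by exact_mod_cast hb
  have hn0 : (0:ℚ) < n := by exact_mod_cast hn
  have hq0 : 0 < 2*n*b^2 := by
    have h1 : 0 < 2*n := by omega
    exact Nat.mul_pos h1 (Nat.pow_pos hb)
  have hm0 : 0 < 2*n*b := by
    have h1 : 0 < 2*n := by omega
    exact Nat.mul_pos h1 hb
  have hQ0 : ((2*n*b^2:ℕ):ℚ) ≠ 0 := by
    have : (0:ℚ) < ((2*n*b^2:ℕ):ℚ) := by exact_mod_cast hq0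
    exact ne_of_gt this
  have hqz : (2*(n:ℤ)*(b:ℤ)^2) = ((2*n*b^2 : ℕ):ℤ) := by push_cast; ring
  unfold dedekindSum
  rw [hqz, abs_of_nonneg (by positivity : (0:ℤ) ≤ ((2*n*b^2:ℕ):ℤ))]
  have hq2 : (((2*n*b^2:ℕ):ℤ):ℚ) = ((2*n*b^2:ℕ):ℚ) := by push_cast; ring
  have hp2 : ((2*(n:ℤ)^2*(b:ℤ)^2 + 2*(n:ℤ)*(b:ℤ) + 1 : ℤ):ℚ)
      = 2*(n:ℚ)^2*(b:ℚ)^2 + 2*(n:ℚ)*(b:ℚ) + 1 := by push_cast; ring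
  simp only [hq2, hp2]
  have hsaw1 : saw (1:ℚ) = 0 := by simpa using saw_intCast 1
  rw [sum_Icc_int (2*n*b^2)
      (fun i => saw ((i:ℚ)/((2*n*b^2:ℕ):ℚ))
        * saw ((2*(n:ℚ)^2*(b:ℚ)^2 + 2*(n:ℚ)*(b:ℚ) + 1)*(i:ℚ)/((2*n*b^2:ℕ):ℚ)))
      hq0 (by norm_num [saw_zero]) (by simp only [hq2, div_self hQ0, hsaw1, zero_mul])]
  simp only [Int.cast_natCast]
  rw [show 2*n*b^2 = (2*n*b)*b from by ring, sum_range_mul]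
  simp only [Nat.cast_add, Nat.cast_mul]
  have hcastq : ((2:ℕ):ℚ)*(n:ℚ)*(b:ℚ)*(b:ℚ) = ((2*n*b^2:ℕ):ℚ) := by push_cast; ring
  simp only [hcastq]
  have h00 : ((0,0) : ℕ×ℕ) ∈ range (2*n*b) ×ˢ range b := by
    rw [Finset.mem_product]
    exact ⟨Finset.mem_range.mpr hm0, Finset.mem_range.mpr hb⟩
  have hprod : ∑ j ∈ range (2*n*b), ∑ r ∈ range b,
        (saw (((b:ℚ)*j+r)/((2*n*b^2:ℕ):ℚ))
          * saw ((2*(n:ℚ)^2*(b:ℚ)^2 + 2*(n:ℚ)*(b:ℚ) + 1)*((b:ℚ)*j+r)/((2*n*b^2:ℕ):ℚ)))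
      = (∑ j ∈ range (2*n*b), ∑ r ∈ range b,
          ((((b:ℚ)*j+r)/((2*n*b^2 : ℕ):ℚ) - 1/2) *
            (((b:ℚ)*j+r)/((2*n*b^2 : ℕ):ℚ) + (r:ℚ)/b
              - (if 2*n*(b-r) ≤ j then (1:ℚ) else 0) - 1/2))) - 1/4 := by
    rw [← Finset.sum_product', ← Finset.sum_product']
    rw [← Finset.sum_erase_add _ _ h00, ← Finset.sum_erase_add _ _ h00]
    have hcong : ∑ x ∈ (range (2*n*b) ×ˢ range b).erase (0,0),
          (saw (((b:ℚ)*x.1+x.2)/((2*n*b^2:ℕ):ℚ))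
            * saw ((2*(n:ℚ)^2*(b:ℚ)^2 + 2*(n:ℚ)*(b:ℚ) + 1)*((b:ℚ)*x.1+x.2)/((2*n*b^2:ℕ):ℚ)))
        = ∑ x ∈ (range (2*n*b) ×ˢ range b).erase (0,0),
          ((((b:ℚ)*x.1+x.2)/((2*n*b^2 : ℕ):ℚ) - 1/2) *
            (((b:ℚ)*x.1+x.2)/((2*n*b^2 : ℕ):ℚ) + (x.2:ℚ)/b
              - (if 2*n*(b-x.2) ≤ x.1 then (1:ℚ) else 0) - 1/2)) := by
      refine Finset.sum_congr rfl fun x hx => ?_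
      rw [Finset.mem_erase, Finset.mem_product, Finset.mem_range, Finset.mem_range] at hx
      refine term_eq n b x.1 x.2 hn hb hx.2.1 hx.2.2 ?_
      rintro ⟨h1, h2⟩
      exact hx.1 (by cases x; simp_all)
    rw [hcong]
    have hT00 : (saw (((b:ℚ)*(0:ℕ)+(0:ℕ))/((2*n*b^2:ℕ):ℚ))
          * saw ((2*(n:ℚ)^2*(b:ℚ)^2 + 2*(n:ℚ)*(b:ℚ) + 1)*((b:ℚ)*(0:ℕ)+(0:ℕ))/((2*n*b^2:ℕ):ℚ))) = 0 := by
      norm_num [saw_zero]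
    have hite : ¬ (2*n*(b-0) ≤ 0) := by
      rw [Nat.sub_zero]; exact Nat.not_le.mpr hm0
    have hF00 : ((((b:ℚ)*(0:ℕ)+(0:ℕ))/((2*n*b^2 : ℕ):ℚ) - 1/2) *
          (((b:ℚ)*(0:ℕ)+(0:ℕ))/((2*n*b^2 : ℕ):ℚ) + ((0:ℕ):ℚ)/b
            - (if 2*n*(b-0) ≤ 0 then (1:ℚ) else 0) - 1/2)) = 1/4 := by
      rw [if_neg hite]; norm_num
    rw [show ((0,0) : ℕ×ℕ).1 = 0 from rfl, show ((0,0) : ℕ×ℕ).2 = 0 from rfl] at *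
    rw [hT00, hF00]
    ring
  rw [hprod, Finset.sum_comm]
  have hinner : ∀ r ∈ range b,
      (∑ j ∈ range (2*n*b),
        ((((b:ℚ)*j+r)/((2*n*b^2 : ℕ):ℚ) - 1/2) *
          (((b:ℚ)*j+r)/((2*n*b^2 : ℕ):ℚ) + (r:ℚ)/b
            - (if 2*n*(b-r) ≤ j then (1:ℚ) else 0) - 1/2)))
      = (1/(2*(n:ℚ)*b^3) + n/b)*(r:ℚ)^2 + (-(1/(2*(n:ℚ)*b^2)) - n)*(r:ℚ)
          + (1/(12*(n:ℚ)*b) + n*b/6) :=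
    fun r hr => inner_sum1 n b r hn hb (Finset.mem_range.mp hr)
  rw [Finset.sum_congr rfl hinner, sum_quad]
  field_simp
  ring

theorem twelve_nb_sq_dedekind (n b : ℕ) (hn : 1 ≤ n) (hb : 1 ≤ b) :
    12 * (n : ℚ) * (b : ℚ) ^ 2 *
        dedekindSum (2 * (n : ℤ) ^ 2 * (b : ℤ) ^ 2 + 2 * (n : ℤ) * (b : ℤ) + 1)
          (2 * (n : ℤ) * (b : ℤ) ^ 2) =
      2 * (n : ℚ) ^ 2 * (b : ℚ) ^ 2 - 3 * (n : ℚ) * (b : ℚ) ^ 2 + 1 := by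
  have hb0 : (0:ℚ) < b := by exact_mod_cast hb
  have hn0 : (0:ℚ) < n := by exact_mod_cast hn
  rw [key n b hn hb]
  field_simp
  ring
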